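/- arXiv:1310.5957 — 10 statements merged into one kernel-verified Lean document; each statement's English description precedes it below -/
import Mathlib

section
/- If f and g are polymatroids on N with g modular, then the convolution f∗g, defined by f∗g(I) = min over J ⊆ I of f(J) + g(I∖J), is a polymatroid on N. -/
open Finset

variable {α : Type*} [DecidableEq α]

/-- A polymatroid rank function on the ground set `N`. -/
def IsPolymatroid (N : Finset α) (f : Finset α → ℝ) : Prop :=
  f ∅ = 0 ∧
  (∀ I J : Finset α, I ⊆ J → J ⊆ N → f I ≤ f J) ∧
  (∀ I J : Finset α, I ⊆ N → J ⊆ N → f (I ∪ J) + f (I ∩ J) ≤ f I + f J)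

/-- A modular set function on `N`. -/
def IsModular (N : Finset α) (g : Finset α → ℝ) : Prop :=
  ∀ I : Finset α, I ⊆ N → g I = ∑ i ∈ I, g {i}

/-- A tight set function on `N`. -/
def IsTight (N : Finset α) (g : Finset α → ℝ) : Prop :=
  ∀ i ∈ N, g N = g (N \ {i})

/-- The convolution `f ∗ g` of two set functions. -/
noncomputable def conv (f g : Finset α → ℝ) (I : Finset α) : ℝ :=
  I.powerset.inf' (Finset.powerset_nonempty I) (fun J => f J + g (I \ J))

theorem conv_isPolymatroid (N : Finset α) (f g : Finset α → ℝ)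
    (hf : IsPolymatroid N f) (hg : IsPolymatroid N g) (hgm : IsModular N g) :
    IsPolymatroid N (conv f g) := by
  obtain ⟨hf0, hfm, hfs⟩ := hf
  obtain ⟨hg0, hgmono, hgs⟩ := hg
  have hconv_le : ∀ I J : Finset α, J ⊆ I → conv f g I ≤ f J + g (I \ J) := by
    intro I J h
    exact Finset.inf'_le _ (Finset.mem_powerset.mpr h)
  refine ⟨?_, ?_, ?_⟩
  · have h1 : conv f g ∅ ≤ 0 := by
      have := hconv_le ∅ ∅ (subset_refl _)
      simpa [hf0, hg0] using this
    have h2 : 0 ≤ conv f g ∅ := by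
      rw [conv]
      apply Finset.le_inf'
      intro J hJ
      simp only [Finset.mem_powerset, Finset.subset_empty] at hJ
      simp [hJ, hf0, hg0]
    linarith
  · intro I J hIJ hJN
    obtain ⟨K, hK, hKeq⟩ :=
      Finset.exists_mem_eq_inf' (Finset.powerset_nonempty J) (fun K => f K + g (J \ K))
    rw [show conv f g J = f K + g (J \ K) from hKeq]
    simp only [Finset.mem_powerset] at hK
    have hKN : K ⊆ N := hK.trans hJN
    have hsub : I \ (K ∩ I) ⊆ J \ K := by
      intro x hx
      simp only [Finset.mem_sdiff, Finset.mem_inter, not_and] at hx ⊢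
      exact ⟨hIJ hx.1, fun hxK => hx.2 hxK hx.1⟩
    calc conv f g I ≤ f (K ∩ I) + g (I \ (K ∩ I)) :=
          hconv_le I _ Finset.inter_subset_right
      _ ≤ f K + g (J \ K) := by
          have h1 := hfm (K ∩ I) K Finset.inter_subset_left hKN
          have h2 := hgmono _ _ hsub (Finset.sdiff_subset.trans hJN)
          linarith
  · intro I J hIN hJN
    obtain ⟨A, hA, hAeq⟩ :=
      Finset.exists_mem_eq_inf' (Finset.powerset_nonempty I) (fun K => f K + g (I \ K))
    obtain ⟨B, hB, hBeq⟩ :=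
      Finset.exists_mem_eq_inf' (Finset.powerset_nonempty J) (fun K => f K + g (J \ K))
    simp only [Finset.mem_powerset] at hA hB
    have hAN : A ⊆ N := hA.trans hIN
    have hBN : B ⊆ N := hB.trans hJN
    set P := (I ∪ J) \ (A ∪ B) with hP
    set Q := (I ∩ J) \ (A ∩ B) with hQ
    set S := I \ A with hS
    set T := J \ B with hT
    have hSN : S ⊆ N := Finset.sdiff_subset.trans hIN
    have hTN : T ⊆ N := Finset.sdiff_subset.trans hJN
    have hPQsub : P ∪ Q ⊆ S ∪ T := by
      intro x hx
      simp only [hP, hQ, hS, hT, Finset.mem_union, Finset.mem_sdiff, Finset.mem_inter,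
        not_and] at hx ⊢
      tauto
    have hPQsub2 : P ∩ Q ⊆ S ∩ T := by
      intro x hx
      simp only [hP, hQ, hS, hT, Finset.mem_union, Finset.mem_sdiff, Finset.mem_inter,
        not_and] at hx ⊢
      tauto
    have hwnn : ∀ i ∈ N, 0 ≤ g {i} := by
      intro i hi
      have := hgmono ∅ {i} (Finset.empty_subset _) (by simpa using hi)
      simpa [hg0] using this
    have key : g P + g Q ≤ g S + g T := by
      have hPN : P ⊆ N :=
        (Finset.subset_union_left.trans hPQsub).trans (Finset.union_subset hSN hTN)
      have hQN : Q ⊆ N :=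
        (Finset.subset_union_right.trans hPQsub).trans (Finset.union_subset hSN hTN)
      rw [hgm P hPN, hgm Q hQN, hgm S hSN, hgm T hTN]
      have eq1 : ∑ i ∈ P ∪ Q, g {i} + ∑ i ∈ P ∩ Q, g {i}
          = ∑ i ∈ P, g {i} + ∑ i ∈ Q, g {i} := Finset.sum_union_inter
      have eq2 : ∑ i ∈ S ∪ T, g {i} + ∑ i ∈ S ∩ T, g {i}
          = ∑ i ∈ S, g {i} + ∑ i ∈ T, g {i} := Finset.sum_union_inter
      have h1 : ∑ i ∈ P ∪ Q, g {i} ≤ ∑ i ∈ S ∪ T, g {i} :=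
        Finset.sum_le_sum_of_subset_of_nonneg hPQsub
          (fun i hi _ => hwnn i (Finset.union_subset hSN hTN hi))
      have h2 : ∑ i ∈ P ∩ Q, g {i} ≤ ∑ i ∈ S ∩ T, g {i} :=
        Finset.sum_le_sum_of_subset_of_nonneg hPQsub2
          (fun i hi _ => hwnn i (hSN (Finset.mem_inter.mp hi).1))
      linarith
    have c1 : conv f g (I ∪ J) ≤ f (A ∪ B) + g P :=
      hconv_le _ _ (Finset.union_subset_union hA hB)
    have c2 : conv f g (I ∩ J) ≤ f (A ∩ B) + g Q :=
      hconv_le _ _ (Finset.inter_subset_inter hA hB)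
    have hfsub := hfs A B hAN hBN
    have e1 : conv f g I = f A + g S := hAeq
    have e2 : conv f g J = f B + g T := hBeq
    linarith
end

section
/- Let f and g be polymatroids on N with g modular, and let i ∈ N. If f({j}) ≤ g({j}) for all j ∈ N∖{i}, then for every I ⊆ N∖{i}: f∗g(I) = f(I), and f∗g({i}∪I) = min{ f(I)+g({i}), f({i}∪I) }. -/
open Finset

variable {α : Type*} [DecidableEq α]

lemma polymatroid_union_le {N : Finset α} {f : Finset α → ℝ} (hf : IsPolymatroid N f) :
    ∀ K ⊆ N, ∀ J ⊆ N, f (J ∪ K) ≤ f J + ∑ k ∈ K, f {k} := by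
  intro K
  induction K using Finset.induction with
  | empty => intro _ J hJ; simp
  | @insert a s ha ih =>
    intro hs J hJ
    have haN : a ∈ N := hs (mem_insert_self a s)
    have hsN : s ⊆ N := (subset_insert a s).trans hs
    have hsub := hf.2.2 (J ∪ s) {a} (union_subset hJ hsN) (by simpa using haN)
    have h0 : 0 ≤ f ((J ∪ s) ∩ {a}) := by
      have := hf.2.1 ∅ ((J ∪ s) ∩ {a}) (empty_subset _)
        ((inter_subset_left).trans (union_subset hJ hsN))
      linarith [hf.1, this]
    have heq : (J ∪ s) ∪ {a} = J ∪ insert a s := by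
      ext x; simp [or_comm, or_assoc, or_left_comm]
    rw [heq] at hsub
    have hih := ih hsN J hJ
    rw [Finset.sum_insert ha]
    linarith

theorem conv_eq_off_elem (N : Finset α) (f g : Finset α → ℝ)
    (hf : IsPolymatroid N f) (hg : IsPolymatroid N g) (hgm : IsModular N g)
    (i : α) (hi : i ∈ N) (hdom : ∀ j ∈ N \ {i}, f {j} ≤ g {j}) :
    ∀ I ⊆ N \ {i},
      conv f g I = f I ∧
      conv f g (insert i I) = min (f I + g {i}) (f (insert i I)) := by
  intro I hI
  have hIN : I ⊆ N := hI.trans (sdiff_subset)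
  have hiI : i ∉ I := fun h => (mem_sdiff.mp (hI h)).2 (mem_singleton_self i)
  have hAN : insert i I ⊆ N := insert_subset hi hIN
  have hgnn : ∀ k ∈ N, 0 ≤ g {k} := fun k hk => by
    have := hg.2.1 ∅ {k} (empty_subset _) (by simpa using hk)
    linarith [hg.1]
  -- key bound
  have key : ∀ J ⊆ I, f I ≤ f J + ∑ k ∈ I \ J, g {k} := by
    intro J hJ
    have h1 : ∑ k ∈ I \ J, f {k} ≤ ∑ k ∈ I \ J, g {k} :=
      Finset.sum_le_sum (fun k hk => hdom k (hI ((sdiff_subset) hk)))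
    have h2 := polymatroid_union_le hf (I \ J) ((sdiff_subset).trans hIN) J (hJ.trans hIN)
    rw [union_sdiff_of_subset hJ] at h2
    linarith
  constructor
  · apply le_antisymm
    · have h := Finset.inf'_le (fun J => f J + g (I \ J)) (mem_powerset_self I)
      simp only [sdiff_self, Finset.bot_eq_empty, hg.1, add_zero] at h
      exact h
    · apply Finset.le_inf'
      intro J hJ
      have hJI : J ⊆ I := mem_powerset.mp hJ
      have := key J hJI
      rw [hgm (I \ J) ((sdiff_subset).trans hIN)]
      linarith
  · have hAi : insert i I \ I = {i} := by
      ext x; simp only [mem_sdiff, mem_insert, mem_singleton]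
      constructor
      · rintro ⟨h | h, h2⟩ <;> [exact h; exact absurd h h2]
      · rintro rfl; exact ⟨Or.inl rfl, hiI⟩
    apply le_antisymm
    · apply le_min
      · have := Finset.inf'_le (fun J => f J + g (insert i I \ J))
          (mem_powerset.mpr (subset_insert i I))
        rw [hAi] at this
        exact this
      · have h := Finset.inf'_le (fun J => f J + g (insert i I \ J))
          (mem_powerset_self (insert i I))
        simp only [sdiff_self, Finset.bot_eq_empty, hg.1, add_zero] at h
        exact h
    · apply Finset.le_inf'
      intro J hJ
      have hJA : J ⊆ insert i I := mem_powerset.mp hJ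
      by_cases hiJ : i ∈ J
      · -- f J + g (I \ J') ≥ f (insert i I) ≥ min
        set J' := J.erase i with hJ'
        have hJ'I : J' ⊆ I := fun x hx => by
          rcases mem_insert.mp (hJA (erase_subset i J hx)) with h | h
          · exact absurd h (ne_of_mem_erase hx)
          · exact h
        have hAJ : insert i I \ J = I \ J' := by
          ext x; simp only [mem_sdiff, mem_insert, mem_erase, J']
          constructor
          · rintro ⟨h | h, h2⟩
            · exact absurd (h ▸ hiJ) h2
            · exact ⟨h, fun h3 => h2 h3.2⟩
          · rintro ⟨h1, h2⟩
            refine ⟨Or.inr h1, fun h3 => h2 ⟨fun he => hiI (he ▸ h1), h3⟩⟩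
        rw [hAJ]
        have hsum : ∑ k ∈ I \ J', f {k} ≤ ∑ k ∈ I \ J', g {k} :=
          Finset.sum_le_sum (fun k hk => hdom k (hI ((sdiff_subset) hk)))
        have h2 := polymatroid_union_le hf (I \ J') ((sdiff_subset).trans hIN) J (hJA.trans hAN)
        have hJu : J ∪ (I \ J') = insert i I := by
          ext x; simp only [mem_union, mem_sdiff, mem_insert, mem_erase, J']
          constructor
          · rintro (h | ⟨h, _⟩)
            · rcases mem_insert.mp (hJA h) with h' | h'
              · exact Or.inl h'
              · exact Or.inr h'
            · exact Or.inr h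
          · rintro (rfl | h)
            · exact Or.inl hiJ
            · by_cases hxJ : x ∈ J
              · exact Or.inl hxJ
              · exact Or.inr ⟨h, fun h3 => hxJ h3.2⟩
        rw [hJu] at h2
        rw [hgm (I \ J') ((sdiff_subset).trans hIN)]
        have := min_le_right (f I + g {i}) (f (insert i I))
        linarith
      · -- J ⊆ I
        have hJI : J ⊆ I := fun x hx => by
          rcases mem_insert.mp (hJA hx) with h | h
          · exact absurd (h ▸ hx) hiJ
          · exact h
        have hAJ : insert i I \ J = insert i (I \ J) := by
          ext x; simp only [mem_sdiff, mem_insert]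
          constructor
          · rintro ⟨h | h, h2⟩
            · exact Or.inl h
            · exact Or.inr ⟨h, h2⟩
          · rintro (rfl | ⟨h1, h2⟩)
            · exact ⟨Or.inl rfl, hiJ⟩
            · exact ⟨Or.inr h1, h2⟩
        rw [hAJ, hgm (insert i (I \ J)) (insert_subset hi ((sdiff_subset).trans hIN)),
          Finset.sum_insert (fun h => hiI ((sdiff_subset) h))]
        have hk := key J hJI
        linarith [min_le_left (f I + g {i}) (f (insert i I))]
end

section
/- Let (N,f) be a polymatroid, i ∈ N, and t a real number with max_{j ∈ N∖{i}} [f({i,j}) − f({j})] ≤ t ≤ f({i}). Let (N,g) be a modular polymatroid with g({i}) = t and f({j}) ≤ g({j}) for all j ∈ N∖{i}. Then the convolution f∗g agrees with f on every subset of N except that f∗g({i}) = t. -/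
open Finset

variable {α : Type*} [DecidableEq α]

lemma key_lemma (N : Finset α) (f g : Finset α → ℝ) (hf : IsPolymatroid N f)
    (i : α) (t : ℝ)
    (ht1 : ∀ j ∈ N \ {i}, f {i, j} - f {j} ≤ t)
    (hgi : g {i} = t) (hdom : ∀ j ∈ N \ {i}, f {j} ≤ g {j}) :
    ∀ n (A B : Finset α), A ⊆ B → B ⊆ N → (B \ A).card = n →
      (i ∈ B \ A → ∃ k ∈ B, k ≠ i) → f B ≤ f A + ∑ j ∈ B \ A, g {j} := by
  intro n
  induction n with
  | zero =>
    intro A B hAB hBN hcard _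
    rw [Finset.card_eq_zero] at hcard
    have : A = B := Finset.Subset.antisymm hAB (by
      intro x hx
      by_contra hxA
      have : x ∈ B \ A := Finset.mem_sdiff.mpr ⟨hx, hxA⟩
      simp [hcard] at this)
    simp [this, hcard]
  | succ n ih =>
    intro A B hAB hBN hcard hcond
    have hne : (B \ A).Nonempty := Finset.card_pos.mp (by omega)
    by_cases hj : ∃ j ∈ B \ A, j ≠ i
    · obtain ⟨j, hjBA, hjne⟩ := hj
      obtain ⟨hjB, hjA⟩ := Finset.mem_sdiff.mp hjBA
      set A' := insert j A with hA'
      have hA'B : A' ⊆ B := Finset.insert_subset hjB hAB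
      have hsd : B \ A' = (B \ A).erase j := by
        ext x; simp [hA', Finset.mem_sdiff, Finset.mem_erase]; tauto
      have hcard' : (B \ A').card = n := by
        rw [hsd, Finset.card_erase_of_mem hjBA, hcard]
        omega
      have h1 : f B ≤ f A' + ∑ k ∈ B \ A', g {k} := by
        apply ih A' B hA'B hBN hcard'
        intro hiB
        exact hcond (by rw [hsd] at hiB; exact Finset.mem_of_mem_erase hiB)
      have h2 : f A' ≤ f A + g {j} := by
        have hsub := hf.2.2 A {j} (hAB.trans hBN) (Finset.singleton_subset_iff.mpr (hBN hjB))
        have : A ∩ {j} = ∅ := by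
          ext x; simp; intro hx hxj; exact hjA (hxj ▸ hx)
        rw [this, hf.1] at hsub
        have hfg : f {j} ≤ g {j} := hdom j (Finset.mem_sdiff.mpr ⟨hBN hjB, by simp [hjne]⟩)
        have : A ∪ {j} = A' := by rw [hA', Finset.union_comm]; rfl
        rw [this] at hsub
        linarith
      have hsum : ∑ k ∈ B \ A, g {k} = g {j} + ∑ k ∈ B \ A', g {k} := by
        rw [hsd]
        exact (Finset.add_sum_erase _ (fun k => g {k}) hjBA).symm
      linarith
    · push_neg at hj
      have hBA : B \ A = {i} := by
        obtain ⟨x, hx⟩ := hne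
        have hxi := hj x hx
        subst hxi
        apply Finset.Subset.antisymm
        · intro y hy; simp [hj y hy]
        · simp [hx]
      have hiBA : i ∈ B \ A := by rw [hBA]; simp
      obtain ⟨hiB, hiA⟩ := Finset.mem_sdiff.mp hiBA
      obtain ⟨k, hkB, hki⟩ := hcond hiBA
      have hkA : k ∈ A := by
        by_contra h
        have : k ∈ B \ A := Finset.mem_sdiff.mpr ⟨hkB, h⟩
        rw [hBA] at this; simp at this; exact hki this
      have hBeq : B = insert i A := by
        ext x
        simp only [Finset.mem_insert]
        constructor
        · intro hx
          by_cases hxA : x ∈ A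
          · right; exact hxA
          · left; have : x ∈ B \ A := Finset.mem_sdiff.mpr ⟨hx, hxA⟩
            rw [hBA] at this; simpa using this
        · rintro (rfl | hx); exact hiB; exact hAB hx
      have hsub := hf.2.2 A {i, k} (hAB.trans hBN) (by
        intro x hx; simp at hx; rcases hx with rfl | rfl
        · exact hBN hiB
        · exact hBN hkB)
      have hunion : A ∪ {i, k} = B := by
        rw [hBeq]
        ext x
        simp only [Finset.mem_union, Finset.mem_insert, Finset.mem_singleton]
        constructor
        · rintro (hx | rfl | rfl)
          · exact Or.inr hx
          · exact Or.inl rfl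
          · exact Or.inr hkA
        · rintro (rfl | hx)
          · exact Or.inr (Or.inl rfl)
          · exact Or.inl hx
      have hinter : A ∩ {i, k} = {k} := by
        ext x; simp
        constructor
        · rintro ⟨hx, rfl | rfl⟩
          · exact absurd hx hiA
          · rfl
        · rintro rfl; exact ⟨hkA, Or.inr rfl⟩
      rw [hunion, hinter] at hsub
      have hik := ht1 k (Finset.mem_sdiff.mpr ⟨hBN hkB, by simp [hki]⟩)
      have : ∑ j ∈ B \ A, g {j} = t := by rw [hBA]; simp [hgi]
      linarith

theorem conv_cut (N : Finset α) (f g : Finset α → ℝ)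
    (hf : IsPolymatroid N f) (hg : IsPolymatroid N g) (hgm : IsModular N g)
    (i : α) (hi : i ∈ N) (t : ℝ)
    (ht1 : ∀ j ∈ N \ {i}, f {i, j} - f {j} ≤ t) (ht2 : t ≤ f {i})
    (hgi : g {i} = t) (hdom : ∀ j ∈ N \ {i}, f {j} ≤ g {j}) :
    conv f g {i} = t ∧ ∀ I ⊆ N, I ≠ {i} → conv f g I = f I := by
  have hg0 : g ∅ = 0 := hg.1
  constructor
  · apply le_antisymm
    · calc conv f g {i} ≤ f ∅ + g ({i} \ ∅) :=
            Finset.inf'_le _ (Finset.mem_powerset.mpr (Finset.empty_subset {i}))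
        _ = t := by simp [hf.1, hgi]
    · apply Finset.le_inf'
      intro J hJ
      rw [Finset.mem_powerset, Finset.subset_singleton_iff] at hJ
      rcases hJ with rfl | rfl
      · simp [hf.1, hgi]
      · simpa [hg0] using ht2
  · intro I hIN hIne
    apply le_antisymm
    · calc conv f g I ≤ f I + g (I \ I) :=
            Finset.inf'_le _ (Finset.mem_powerset.mpr Finset.Subset.rfl)
        _ = f I := by simp [hg0]
    · apply Finset.le_inf'
      intro J hJ
      rw [Finset.mem_powerset] at hJ
      have hIJN : I \ J ⊆ N := Finset.sdiff_subset.trans hIN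
      rw [hgm _ hIJN]
      have hcond : i ∈ I \ J → ∃ k ∈ I, k ≠ i := by
        intro hiIJ
        have hiI : i ∈ I := (Finset.mem_sdiff.mp hiIJ).1
        by_contra h
        push_neg at h
        apply hIne
        apply Finset.Subset.antisymm
        · intro x hx; simp [h x hx]
        · simp [hiI]
      have := key_lemma N f g hf i t ht1 hgi hdom (I \ J).card J I hJ hIN rfl hcond
      linarith
end

section
/- Every polymatroid h on N decomposes uniquely as h = h^ti + h^m, where h^m(I) = Σ_{i∈I} [h(N) − h(N∖{i})] is a modular polymatroid and h^ti(I) = h(I) − h^m(I) is a tight polymatroid, i.e., h^ti(N) = h^ti(N∖{i}) for all i ∈ N. -/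
open Finset

variable {α : Type*} [DecidableEq α]

theorem tight_modular_decomposition (N : Finset α) (h : Finset α → ℝ)
    (hh : IsPolymatroid N h) :
    let hm : Finset α → ℝ := fun I => ∑ i ∈ I, (h N - h (N \ {i}))
    let hti : Finset α → ℝ := fun I => h I - hm I
    (IsPolymatroid N hm ∧ IsModular N hm) ∧
    (IsPolymatroid N hti ∧ IsTight N hti) ∧
    (∀ I ⊆ N, h I = hti I + hm I) ∧
    (∀ f g : Finset α → ℝ,
      IsPolymatroid N f → IsTight N f → IsPolymatroid N g → IsModular N g →
      (∀ I ⊆ N, h I = f I + g I) → ∀ I ⊆ N, f I = hti I ∧ g I = hm I) := by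
  obtain ⟨h0, hmono, hsub⟩ := hh
  intro hm hti
  have hc_nonneg : ∀ i : α, 0 ≤ h N - h (N \ {i}) := fun i => by
    have := hmono (N \ {i}) N sdiff_subset (Finset.Subset.refl N)
    linarith
  have key : ∀ I ⊆ N, ∀ j ∈ N, j ∉ I →
      h N - h (N \ {j}) ≤ h (insert j I) - h I := by
    intro I hIN j hj hjI
    have hU : insert j I ∪ (N \ {j}) = N := by
      ext x
      simp only [mem_union, mem_insert, mem_sdiff, mem_singleton]
      constructor
      · rintro ((rfl | hx) | ⟨hx, _⟩)
        · exact hj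
        · exact hIN hx
        · exact hx
      · intro hx
        by_cases hxj : x = j
        · exact Or.inl (Or.inl hxj)
        · exact Or.inr ⟨hx, hxj⟩
    have hI2 : insert j I ∩ (N \ {j}) = I := by
      ext x
      simp only [mem_inter, mem_insert, mem_sdiff, mem_singleton]
      constructor
      · rintro ⟨rfl | hx, _, hne⟩
        · exact absurd rfl hne
        · exact hx
      · exact fun hx => ⟨Or.inr hx, hIN hx, fun e => hjI (e ▸ hx)⟩
    have hs := hsub (insert j I) (N \ {j}) (insert_subset hj hIN) sdiff_subset
    rw [hU, hI2] at hs
    linarith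
  have sumkey : ∀ S : Finset α, S ⊆ N → ∀ I ⊆ N, Disjoint S I →
      ∑ i ∈ S, (h N - h (N \ {i})) ≤ h (I ∪ S) - h I := by
    intro S
    induction S using Finset.induction_on with
    | empty => intro _ I _ _; simp
    | @insert a S ha ih =>
      intro hS I hIN hdisj
      have haN : a ∈ N := hS (mem_insert_self a S)
      have hSN : S ⊆ N := (subset_insert a S).trans hS
      have hdS : Disjoint S I := hdisj.mono_left (subset_insert a S)
      have h1 := ih hSN I hIN hdS
      have haIS : a ∉ I ∪ S := by
        simp only [mem_union]
        rintro (hx | hx)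
        · exact (Finset.disjoint_left.mp hdisj (mem_insert_self a S)) hx
        · exact ha hx
      have h2 := key (I ∪ S) (union_subset hIN hSN) a haN haIS
      rw [Finset.sum_insert ha]
      have : I ∪ insert a S = insert a (I ∪ S) := by
        ext x; simp only [mem_union, mem_insert]; tauto
      rw [this]
      linarith
  have hm_mono : ∀ I J : Finset α, I ⊆ J → J ⊆ N → hm I ≤ hm J := by
    intro I J hIJ _
    exact Finset.sum_le_sum_of_subset_of_nonneg hIJ (fun i _ _ => hc_nonneg i)
  have hm_modeq : ∀ I J : Finset α, hm (I ∪ J) + hm (I ∩ J) = hm I + hm J := by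
    intro I J
    exact Finset.sum_union_inter
  have hm_poly : IsPolymatroid N hm := by
    refine ⟨by simp [hm], hm_mono, fun I J _ _ => le_of_eq (hm_modeq I J)⟩
  have hm_mod : IsModular N hm := by
    intro I _
    refine Finset.sum_congr rfl fun i _ => ?_
    simp [hm]
  have hdiff : ∀ I J : Finset α, I ⊆ J → hm J - hm I = ∑ i ∈ J \ I, (h N - h (N \ {i})) := by
    intro I J hIJ
    have := Finset.sum_sdiff (f := fun i => h N - h (N \ {i})) hIJ
    show (∑ i ∈ J, (h N - h (N \ {i}))) - ∑ i ∈ I, (h N - h (N \ {i})) = _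
    linarith
  have hti_mono : ∀ I J : Finset α, I ⊆ J → J ⊆ N → hti I ≤ hti J := by
    intro I J hIJ hJN
    have h1 := sumkey (J \ I) ((sdiff_subset).trans hJN) I (hIJ.trans hJN) sdiff_disjoint
    rw [Finset.union_sdiff_of_subset hIJ] at h1
    have h2 := hdiff I J hIJ
    show h I - hm I ≤ h J - hm J
    linarith
  have hti_poly : IsPolymatroid N hti := by
    refine ⟨?_, hti_mono, ?_⟩
    · show h ∅ - hm ∅ = 0
      simp [hm, h0]
    · intro I J hI hJ
      have h1 := hsub I J hI hJ
      have h2 := hm_modeq I J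
      show (h (I ∪ J) - hm (I ∪ J)) + (h (I ∩ J) - hm (I ∩ J)) ≤ (h I - hm I) + (h J - hm J)
      linarith
  have hti_tight : IsTight N hti := by
    intro i hi
    have h1 := hdiff (N \ {i}) N sdiff_subset
    have h2 : N \ (N \ {i}) = {i} := by
      rw [Finset.sdiff_sdiff_self_left, Finset.inter_singleton_of_mem hi]
    rw [h2, Finset.sum_singleton] at h1
    show h N - hm N = h (N \ {i}) - hm (N \ {i})
    linarith
  refine ⟨⟨hm_poly, hm_mod⟩, ⟨hti_poly, hti_tight⟩, fun I _ => by show h I = (h I - hm I) + hm I; ring, ?_⟩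
  intro f g hf hft hg hgm hfg
  have hgc : ∀ i ∈ N, g {i} = h N - h (N \ {i}) := by
    intro i hi
    have h1 := hfg N (Finset.Subset.refl N)
    have h2 := hfg (N \ {i}) sdiff_subset
    have h3 := hft i hi
    have h4 := hgm N (Finset.Subset.refl N)
    have h5 := hgm (N \ {i}) sdiff_subset
    have h6 := Finset.sum_sdiff (f := fun j => g {j}) (Finset.sdiff_subset (s := N) (t := {i}))
    have h7 : N \ (N \ {i}) = {i} := by
      rw [Finset.sdiff_sdiff_self_left, Finset.inter_singleton_of_mem hi]
    rw [h7, Finset.sum_singleton] at h6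
    rw [h4] at h1
    rw [h5] at h2
    linarith
  intro I hIN
  have hgI : g I = hm I := by
    rw [hgm I hIN]
    exact Finset.sum_congr rfl fun i hiI => hgc i (hIN hiI)
  have hfI : f I = hti I := by
    have := hfg I hIN
    show f I = h I - hm I
    linarith
  exact ⟨hfI, hgI⟩
end

section
/- The tight polymatroids on N form a linear subspace of ℝ^{𝒫(N)} (closed under nonnegative combinations and whose difference space intersects the modular polymatroids' difference space only in 0), so that the cone of all polymatroids is the direct sum H_N = H_N^ti ⊕ H_N^mod. -/
open Finset

variable {α : Type*} [DecidableEq α]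

lemma step_lemma (N : Finset α) (h : Finset α → ℝ) (hp : IsPolymatroid N h)
    {A : Finset α} {i : α} (hA : A ⊆ N) (hi : i ∈ N) (hiA : i ∉ A) :
    h N - h (N \ {i}) ≤ h (insert i A) - h A := by
  have hsub := hp.2.2 (insert i A) (N \ {i}) (insert_subset hi hA) sdiff_subset
  have hu : insert i A ∪ (N \ {i}) = N := by
    ext x
    simp only [mem_union, mem_insert, mem_sdiff, mem_singleton]
    constructor
    · rintro ((rfl | hx) | ⟨hx, _⟩)
      · exact hi
      · exact hA hx
      · exact hx
    · intro hx
      by_cases hxi : x = i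
      · exact Or.inl (Or.inl hxi)
      · exact Or.inr ⟨hx, hxi⟩
  have hint : insert i A ∩ (N \ {i}) = A := by
    ext x
    simp only [mem_inter, mem_insert, mem_sdiff, mem_singleton]
    constructor
    · rintro ⟨rfl | hx, _, hxi⟩
      · exact absurd rfl hxi
      · exact hx
    · intro hx
      exact ⟨Or.inr hx, hA hx, fun hxi => hiA (hxi ▸ hx)⟩
  rw [hu, hint] at hsub
  linarith

lemma telescope (N : Finset α) (h : Finset α → ℝ) (hp : IsPolymatroid N h) :
    ∀ n (I J : Finset α), I ⊆ J → J ⊆ N → (J \ I).card = n →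
      ∑ i ∈ J \ I, (h N - h (N \ {i})) ≤ h J - h I := by
  intro n
  induction n with
  | zero =>
    intro I J hIJ _ hc
    have he : J \ I = ∅ := card_eq_zero.mp hc
    have hJI : J = I := by
      apply Subset.antisymm _ hIJ
      intro x hx
      by_contra hxI
      exact (notMem_empty x) (he ▸ mem_sdiff.mpr ⟨hx, hxI⟩)
    rw [he, hJI]
    simp
  | succ n ih =>
    intro I J hIJ hJN hc
    obtain ⟨i, hi⟩ : (J \ I).Nonempty := card_pos.mp (hc ▸ n.succ_pos)
    rw [mem_sdiff] at hi
    have hstep := step_lemma N h hp (hIJ.trans hJN) (hJN hi.1) hi.2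
    have hI' : insert i I ⊆ J := insert_subset hi.1 hIJ
    have hdiff : J \ insert i I = (J \ I).erase i := by
      ext x
      simp only [mem_sdiff, mem_insert, mem_erase, not_or]
      tauto
    have hcard : (J \ insert i I).card = n := by
      rw [hdiff, card_erase_of_mem (mem_sdiff.mpr hi), hc]
      rfl
    have hih := ih (insert i I) J hI' hJN hcard
    have hsum : ∑ x ∈ J \ I, (h N - h (N \ {x}))
        = (h N - h (N \ {i})) + ∑ x ∈ J \ insert i I, (h N - h (N \ {x})) := by
      rw [hdiff]
      exact (add_sum_erase (J \ I) (fun x => h N - h (N \ {x})) (mem_sdiff.mpr hi)).symm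
    rw [hsum]
    linarith

theorem tight_mod_direct_sum (N : Finset α) :
    (∀ f g : Finset α → ℝ, ∀ a b : ℝ, 0 ≤ a → 0 ≤ b →
      IsPolymatroid N f → IsTight N f → IsPolymatroid N g → IsTight N g →
      IsPolymatroid N (fun I => a * f I + b * g I) ∧
        IsTight N (fun I => a * f I + b * g I)) ∧
    (∀ f : Finset α → ℝ, IsTight N f → IsModular N f → ∀ I ⊆ N, f I = 0) ∧
    (∀ h : Finset α → ℝ, IsPolymatroid N h →
      ∃ f g : Finset α → ℝ,
        (IsPolymatroid N f ∧ IsTight N f) ∧ (IsPolymatroid N g ∧ IsModular N g) ∧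
        (∀ I ⊆ N, h I = f I + g I) ∧
        (∀ f' g' : Finset α → ℝ,
          IsPolymatroid N f' → IsTight N f' → IsPolymatroid N g' → IsModular N g' →
          (∀ I ⊆ N, h I = f' I + g' I) →
          ∀ I ⊆ N, f' I = f I ∧ g' I = g I)) := by
  refine ⟨?_, ?_, ?_⟩
  · -- Part 1: nonnegative combinations
    intro f g a b ha hb hf hft hg hgt
    refine ⟨⟨by simp [hf.1, hg.1], ?_, ?_⟩, ?_⟩
    · intro I J hIJ hJN
      have h1 := mul_le_mul_of_nonneg_left (hf.2.1 I J hIJ hJN) ha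
      have h2 := mul_le_mul_of_nonneg_left (hg.2.1 I J hIJ hJN) hb
      dsimp only
      linarith
    · intro I J hI hJ
      have h1 := mul_le_mul_of_nonneg_left (hf.2.2 I J hI hJ) ha
      have h2 := mul_le_mul_of_nonneg_left (hg.2.2 I J hI hJ) hb
      dsimp only
      linarith
    · intro i hi
      dsimp only
      rw [hft i hi, hgt i hi]
  · -- Part 2: tight ∩ modular = 0
    intro f hft hfm I hIN
    have hsing : ∀ i ∈ N, f {i} = 0 := by
      intro i hi
      have h1 : f N = ∑ j ∈ N, f {j} := hfm N (Subset.refl N)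
      have h2 : f (N \ {i}) = ∑ j ∈ N \ {i}, f {j} := hfm _ sdiff_subset
      have h3 : N \ {i} = N.erase i := (erase_eq N i).symm
      have h4 : f {i} + ∑ j ∈ N.erase i, f {j} = ∑ j ∈ N, f {j} :=
        add_sum_erase N (fun j => f {j}) hi
      have h5 := hft i hi
      rw [h1, h2, h3] at h5
      linarith
    rw [hfm I hIN]
    exact Finset.sum_eq_zero fun i hi => hsing i (hIN hi)
  · -- Part 3: decomposition and uniqueness
    intro h hp
    set t : α → ℝ := fun i => h N - h (N \ {i}) with ht
    set g : Finset α → ℝ := fun I => ∑ i ∈ I, t i with hgdef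
    set f : Finset α → ℝ := fun I => h I - g I with hfdef
    have htnn : ∀ i ∈ N, 0 ≤ t i := by
      intro i hi
      have := hp.2.1 (N \ {i}) N sdiff_subset (Subset.refl N)
      simp only [ht]
      linarith
    have hgmod : IsModular N g := by
      intro I _
      simp [hgdef]
    have hgN : ∀ i ∈ N, g N - g (N \ {i}) = t i := by
      intro i hi
      have h3 : N \ {i} = N.erase i := (erase_eq N i).symm
      have h4 : t i + ∑ j ∈ N.erase i, t j = ∑ j ∈ N, t j := add_sum_erase N t hi
      simp only [hgdef, h3]
      linarith
    refine ⟨f, g, ⟨⟨?_, ?_, ?_⟩, ?_⟩, ⟨⟨?_, ?_, ?_⟩, hgmod⟩, ?_, ?_⟩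
    · simp [hfdef, hgdef, hp.1]
    · -- f monotone
      intro I J hIJ hJN
      have key := telescope N h hp (J \ I).card I J hIJ hJN rfl
      have hsum : g J = g I + ∑ i ∈ J \ I, t i := by
        simp only [hgdef]
        rw [← sum_sdiff hIJ]
        ring
      simp only [hfdef]
      rw [hsum]
      linarith
    · -- f submodular
      intro I J hI hJ
      have hsub := hp.2.2 I J hI hJ
      have hgid : g (I ∪ J) + g (I ∩ J) = g I + g J := by
        simp only [hgdef]
        exact sum_union_inter
      simp only [hfdef]
      linarith
    · -- f tight
      intro i hi
      simp only [hfdef]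
      have h2 : t i = h N - h (N \ {i}) := rfl
      have h3 := hgN i hi
      linarith
    · simp [hgdef]
    · -- g monotone
      intro I J hIJ hJN
      exact sum_le_sum_of_subset_of_nonneg hIJ fun i hiJ _ => htnn i (hJN hiJ)
    · -- g submodular
      intro I J _ _
      have : g (I ∪ J) + g (I ∩ J) = g I + g J := sum_union_inter
      linarith
    · intro I _
      simp [hfdef]
    · -- uniqueness
      intro f' g' hf'p hf't hg'p hg'm heq
      have hg'sing : ∀ i ∈ N, g' {i} = t i := by
        intro i hi
        have h1 : h N = f' N + g' N := heq N (Subset.refl N)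
        have h2 : h (N \ {i}) = f' (N \ {i}) + g' (N \ {i}) := heq _ sdiff_subset
        have h3 := hf't i hi
        have h4 : g' N = ∑ j ∈ N, g' {j} := hg'm N (Subset.refl N)
        have h5 : g' (N \ {i}) = ∑ j ∈ N \ {i}, g' {j} := hg'm _ sdiff_subset
        have h6 : N \ {i} = N.erase i := (erase_eq N i).symm
        have h7 : g' {i} + ∑ j ∈ N.erase i, g' {j} = ∑ j ∈ N, g' {j} :=
          add_sum_erase N (fun j => g' {j}) hi
        simp only [ht]
        rw [h1, h2, h3, h4, h5, h6]
        linarith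
      intro I hIN
      have hg'I : g' I = g I := by
        rw [hg'm I hIN]
        simp only [hgdef]
        exact Finset.sum_congr rfl fun i hi => hg'sing i (hIN hi)
      have hf'I : f' I = f I := by
        have := heq I hIN
        simp only [hfdef]
        rw [this, hg'I]
        ring
      exact ⟨hf'I, hg'I⟩
end

section
/- Let (N,f) be a polymatroid, L ⊆ N, and 0 ≤ t ≤ f(L). Define f*_{L,t}(I) = min{ f(I), f(L∪I) − t } for I ⊆ N. Then (N, f*_{L,t}) is a polymatroid. -/
open Finset

variable {α : Type*} [DecidableEq α]

theorem principal_ext_contraction_isPolymatroid (N : Finset α) (f : Finset α → ℝ)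
    (hf : IsPolymatroid N f) (L : Finset α) (hL : L ⊆ N) (t : ℝ)
    (ht0 : 0 ≤ t) (ht : t ≤ f L) :
    IsPolymatroid N (fun I => min (f I) (f (L ∪ I) - t)) := by
  obtain ⟨h0, hmono, hsub⟩ := hf
  refine ⟨?_, ?_, ?_⟩
  · simp only [union_empty, h0]
    have : 0 ≤ f L - t := by linarith
    simp [min_eq_left this]
  · intro I J hIJ hJN
    exact le_min (min_le_of_left_le (hmono I J hIJ hJN))
      (min_le_of_right_le (by
        have := hmono (L ∪ I) (L ∪ J) (union_subset_union_right hIJ)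
          (union_subset hL hJN)
        linarith))
  · intro I J hIN hJN
    simp only
    rcases le_total (f I) (f (L ∪ I) - t) with hI | hI <;>
      rcases le_total (f J) (f (L ∪ J) - t) with hJ | hJ
    · rw [min_eq_left hI, min_eq_left hJ]
      have h1 : min (f (I ∪ J)) (f (L ∪ (I ∪ J)) - t) ≤ f (I ∪ J) := min_le_left _ _
      have h2 : min (f (I ∩ J)) (f (L ∪ (I ∩ J)) - t) ≤ f (I ∩ J) := min_le_left _ _
      have := hsub I J hIN hJN
      linarith
    · rw [min_eq_left hI, min_eq_right hJ]
      have h1 : min (f (I ∪ J)) (f (L ∪ (I ∪ J)) - t) ≤ f (L ∪ (I ∪ J)) - t :=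
        min_le_right _ _
      have h2 : min (f (I ∩ J)) (f (L ∪ (I ∩ J)) - t) ≤ f (I ∩ J) := min_le_left _ _
      have hs := hsub I (L ∪ J) hIN (union_subset hL hJN)
      have he : I ∪ (L ∪ J) = L ∪ (I ∪ J) := by ac_rfl
      rw [he] at hs
      have hm : f (I ∩ J) ≤ f (I ∩ (L ∪ J)) := by
        refine hmono _ _ (inter_subset_inter le_rfl subset_union_right) ?_
        exact (inter_subset_left).trans hIN
      linarith
    · rw [min_eq_right hI, min_eq_left hJ]
      have h1 : min (f (I ∪ J)) (f (L ∪ (I ∪ J)) - t) ≤ f (L ∪ (I ∪ J)) - t :=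
        min_le_right _ _
      have h2 : min (f (I ∩ J)) (f (L ∪ (I ∩ J)) - t) ≤ f (I ∩ J) := min_le_left _ _
      have hs := hsub J (L ∪ I) hJN (union_subset hL hIN)
      have he : J ∪ (L ∪ I) = L ∪ (I ∪ J) := by ac_rfl
      rw [he] at hs
      have hm : f (I ∩ J) ≤ f (J ∩ (L ∪ I)) := by
        refine hmono _ _ ?_ ((inter_subset_left).trans hJN)
        rw [inter_comm]
        exact inter_subset_inter le_rfl subset_union_right
      linarith
    · rw [min_eq_right hI, min_eq_right hJ]
      have h1 : min (f (I ∪ J)) (f (L ∪ (I ∪ J)) - t) ≤ f (L ∪ (I ∪ J)) - t :=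
        min_le_right _ _
      have h2 : min (f (I ∩ J)) (f (L ∪ (I ∩ J)) - t) ≤ f (L ∪ (I ∩ J)) - t :=
        min_le_right _ _
      have hs := hsub (L ∪ I) (L ∪ J) (union_subset hL hIN) (union_subset hL hJN)
      have he : (L ∪ I) ∪ (L ∪ J) = L ∪ (I ∪ J) := by ac_rfl
      rw [he] at hs
      have hm : f (L ∪ (I ∩ J)) ≤ f ((L ∪ I) ∩ (L ∪ J)) := by
        refine hmono _ _ ?_ ?_
        · rw [union_inter_distrib_left]
        · exact (inter_subset_left).trans (union_subset hL hIN)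
      linarith
end

section
/- Let (N,f) be a polymatroid, L ⊆ N, 0 ≤ t ≤ f(L), and suppose that for every I ⊆ N with L not contained in the f-closure cl(I), there exists ℓ ∈ L∖cl(I) with t ≤ f({ℓ}∪I) − f(I). Then f*_{L,t}(I) = f(I) − t when L ⊆ cl(I), and f*_{L,t}(I) = f(I) otherwise, where f*_{L,t}(I) = min{ f(I), f(L∪I) − t }. -/
open Finset

variable {α : Type*} [DecidableEq α]

theorem principal_ext_contraction_values (N : Finset α) (f : Finset α → ℝ)
    (hf : IsPolymatroid N f) (L : Finset α) (hL : L ⊆ N) (t : ℝ)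
    (ht0 : 0 ≤ t) (ht : t ≤ f L)
    (hcl : ∀ I ⊆ N, ¬ L ⊆ N.filter (fun x => f (insert x I) = f I) →
      ∃ l ∈ L \ N.filter (fun x => f (insert x I) = f I),
        t ≤ f (insert l I) - f I) :
    ∀ I ⊆ N,
      (L ⊆ N.filter (fun x => f (insert x I) = f I) →
        min (f I) (f (L ∪ I) - t) = f I - t) ∧
      (¬ L ⊆ N.filter (fun x => f (insert x I) = f I) →
        min (f I) (f (L ∪ I) - t) = f I) := by
  obtain ⟨hf0, hmono, hsub⟩ := hf
  intro I hI
  constructor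
  · intro hLcl
    -- key: f (I ∪ S) = f I for all S ⊆ L
    have key : ∀ S : Finset α, S ⊆ L → f (I ∪ S) = f I := by
      intro S
      induction S using Finset.induction_on with
      | empty => intro _; simp
      | @insert a S ha ih =>
        intro hSL
        have haL : a ∈ L := hSL (Finset.mem_insert_self a S)
        have hS : S ⊆ L := fun x hx => hSL (Finset.mem_insert_of_mem hx)
        have ha' : f (insert a I) = f I := (Finset.mem_filter.mp (hLcl haL)).2
        have hIS : f (I ∪ S) = f I := ih hS
        have hsum := hsub (insert a I) (I ∪ S)
          (Finset.insert_subset (hL haL) hI)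
          (Finset.union_subset hI (hS.trans hL))
        have hUeq : insert a I ∪ (I ∪ S) = I ∪ insert a S := by
          ext x; simp [Finset.mem_insert, Finset.mem_union, or_comm, or_left_comm, or_assoc]
        have hIsub : I ⊆ insert a I ∩ (I ∪ S) := by
          intro x hx
          exact Finset.mem_inter.mpr ⟨Finset.mem_insert_of_mem hx,
            Finset.mem_union_left _ hx⟩
        have hle : f I ≤ f (insert a I ∩ (I ∪ S)) :=
          hmono _ _ hIsub (Finset.inter_subset_left.trans
            (Finset.insert_subset (hL haL) hI))
        have hge : f I ≤ f (I ∪ insert a S) :=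
          hmono I _ Finset.subset_union_left
            (Finset.union_subset hI ((Finset.insert_subset haL hS).trans hL))
        rw [hUeq] at hsum
        have : f (I ∪ insert a S) ≤ f I := by linarith
        linarith
    have : f (L ∪ I) = f I := by rw [Finset.union_comm]; exact key L (subset_refl L)
    rw [this]
    have : f I - t ≤ f I := by linarith
    simp [min_eq_right, this]
  · intro hnot
    obtain ⟨l, hl, hlt⟩ := hcl I hI hnot
    have hlL : l ∈ L := (Finset.mem_sdiff.mp hl).1
    have hmle : f (insert l I) ≤ f (L ∪ I) := by
      apply hmono
      · exact Finset.insert_subset (Finset.mem_union_left _ hlL)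
          Finset.subset_union_right
      · exact Finset.union_subset hL hI
    have : f I ≤ f (L ∪ I) - t := by linarith
    exact min_eq_left this
end

section
/- Let N = {i,j,k,l} and h a tight polymatroid on N (h(N) = h(N∖{m}) for all m ∈ N) with ⬠_{ij}h ≤ 0. Then h(ij) ≥ h(jl), h(ij) ≥ h(il), and h(ij) ≥ h(kl); that is, h(ij) is maximal among h(J) for two-element J ⊆ N. -/
open Finset

variable {α : Type*} [DecidableEq α]

private lemma inter_pair {α : Type*} [DecidableEq α] {a b c : α} (hab : a ≠ b) :
    ({a, c} : Finset α) ∩ {b, c} = {c} := by ext x; simp; aesop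

private lemma sdiff_last {a b c d : α} (had : a ≠ d) (hbd : b ≠ d) (hcd : c ≠ d) :
    ({a, b, c, d} : Finset α) \ {d} = {a, b, c} := by ext x; simp; aesop

theorem reversed_ingleton_tight_consequence (i j k l : α)
    (hij : i ≠ j) (hik : i ≠ k) (hil : i ≠ l) (hjk : j ≠ k) (hjl : j ≠ l)
    (hkl : k ≠ l) (h : Finset α → ℝ)
    (hh : IsPolymatroid ({i, j, k, l} : Finset α) h)
    (hti : IsTight ({i, j, k, l} : Finset α) h)
    (hIng : (h {i, k} + h {j, k} + h {i, l} + h {j, l} + h {k, l}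
      - h {i, j} - h {k} - h {l} - h {i, k, l} - h {j, k, l}) ≤ 0) :
    h {j, l} ≤ h {i, j} ∧ h {i, l} ≤ h {i, j} ∧ h {k, l} ≤ h {i, j} := by
  obtain ⟨h0, hmono, hsub⟩ := hh
  have sik : ({i,k} : Finset α) ⊆ {i,j,k,l} := by intro x; simp; tauto
  have sjk : ({j,k} : Finset α) ⊆ {i,j,k,l} := by intro x; simp; tauto
  have sil : ({i,l} : Finset α) ⊆ {i,j,k,l} := by intro x; simp; tauto
  have sjl : ({j,l} : Finset α) ⊆ {i,j,k,l} := by intro x; simp; tauto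
  have skl : ({k,l} : Finset α) ⊆ {i,j,k,l} := by intro x; simp; tauto
  have e1 : ({i,k} : Finset α) ∪ {j,k} = {i,j,k} := by ext x; simp; tauto
  have e1' : ({i,k} : Finset α) ∩ {j,k} = {k} := inter_pair hij
  have e2 : ({i,l} : Finset α) ∪ {j,l} = {i,j,l} := by ext x; simp; tauto
  have e2' : ({i,l} : Finset α) ∩ {j,l} = {l} := inter_pair hij
  have e3 : ({i,l} : Finset α) ∪ {k,l} = {i,k,l} := by ext x; simp; tauto
  have e3' : ({i,l} : Finset α) ∩ {k,l} = {l} := inter_pair hik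
  have e4 : ({j,l} : Finset α) ∪ {k,l} = {j,k,l} := by ext x; simp; tauto
  have e4' : ({j,l} : Finset α) ∩ {k,l} = {l} := inter_pair hjk
  have d_l : ({i,j,k,l} : Finset α) \ {l} = {i,j,k} := sdiff_last hil hjl hkl
  have d_k : ({i,j,k,l} : Finset α) \ {k} = {i,j,l} := by
    have : ({i,j,k,l} : Finset α) = {i,j,l,k} := by ext x; simp; tauto
    rw [this]; exact sdiff_last hik hjk (Ne.symm hkl)
  have d_j : ({i,j,k,l} : Finset α) \ {j} = {i,k,l} := by
    have : ({i,j,k,l} : Finset α) = {i,k,l,j} := by ext x; simp; tauto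
    rw [this]; exact sdiff_last hij (Ne.symm hjk) (Ne.symm hjl)
  have d_i : ({i,j,k,l} : Finset α) \ {i} = {j,k,l} := by
    have : ({i,j,k,l} : Finset α) = {j,k,l,i} := by ext x; simp; tauto
    rw [this]; exact sdiff_last (Ne.symm hij) (Ne.symm hik) (Ne.symm hil)
  have tl : h {i,j,k,l} = h {i,j,k} := by
    have := hti l (by simp); rwa [d_l] at this
  have tk : h {i,j,k,l} = h {i,j,l} := by
    have := hti k (by simp); rwa [d_k] at this
  have tj : h {i,j,k,l} = h {i,k,l} := by
    have := hti j (by simp); rwa [d_j] at this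
  have ti : h {i,j,k,l} = h {j,k,l} := by
    have := hti i (by simp); rwa [d_i] at this
  have sub1 := hsub {i,k} {j,k} sik sjk
  rw [e1, e1'] at sub1
  have sub2 := hsub {i,l} {j,l} sil sjl
  rw [e2, e2'] at sub2
  have sub3 := hsub {i,l} {k,l} sil skl
  rw [e3, e3'] at sub3
  have sub4 := hsub {j,l} {k,l} sjl skl
  rw [e4, e4'] at sub4
  refine ⟨by linarith, by linarith, by linarith⟩
end

section
/- Let N = {i,j,k,l} and let the function r̄_{ij} on 𝒫(N) be defined by r̄_{ij}(K) = 3 if K ∈ {ik, jk, il, jl, kl}, and r̄_{ij}(K) = min{4, 2|K|} otherwise. Then r̄_{ij} is a tight polymatroid and ⬠_{ij} r̄_{ij} = −1. -/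
open Finset

variable {α : Type*} [DecidableEq α]

/-- ℕ-valued model of the rank function on `Fin 4`. -/
def hnat : Finset (Fin 4) → ℕ := fun K =>
  if K = {0, 2} ∨ K = {1, 2} ∨ K = {0, 3} ∨ K = {1, 3} ∨ K = {2, 3}
  then 3 else min 4 (2 * K.card)

lemma hnat_mono : ∀ S T : Finset (Fin 4), S ⊆ T → hnat S ≤ hnat T := by decide

lemma hnat_submod : ∀ S T : Finset (Fin 4),
    hnat (S ∪ T) + hnat (S ∩ T) ≤ hnat S + hnat T := by decide

lemma hnat_tight : ∀ x : Fin 4, hnat Finset.univ = hnat (Finset.univ \ {x}) := by decide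

theorem rbar_isTightPolymatroid (i j k l : α)
    (hij : i ≠ j) (hik : i ≠ k) (hil : i ≠ l) (hjk : j ≠ k) (hjl : j ≠ l)
    (hkl : k ≠ l) :
    let h : Finset α → ℝ := fun K =>
      if K = {i, k} ∨ K = {j, k} ∨ K = {i, l} ∨ K = {j, l} ∨ K = {k, l}
      then 3 else min 4 (2 * K.card)
    IsPolymatroid ({i, j, k, l} : Finset α) h ∧
    IsTight ({i, j, k, l} : Finset α) h ∧
    (h {i, k} + h {j, k} + h {i, l} + h {j, l} + h {k, l}
      - h {i, j} - h {k} - h {l} - h {i, k, l} - h {j, k, l}) = -1 := by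
  intro h
  have hdef : ∀ K : Finset α, h K =
      if K = {i, k} ∨ K = {j, k} ∨ K = {i, l} ∨ K = {j, l} ∨ K = {k, l}
      then (3 : ℝ) else min 4 (2 * (K.card : ℝ)) := fun K => rfl
  set f4 : Fin 4 → α := ![i, j, k, l] with hf4
  have hinj : Function.Injective f4 := by
    intro a b hab
    fin_cases a <;> fin_cases b <;> simp_all [f4]
  have himg : ∀ S T : Finset (Fin 4), S.image f4 = T.image f4 ↔ S = T :=
    fun S T => ⟨fun e => Finset.image_injective hinj e, fun e => by rw [e]⟩
  have e02 : ({i, k} : Finset α) = ({0, 2} : Finset (Fin 4)).image f4 := by simp [f4]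
  have e12 : ({j, k} : Finset α) = ({1, 2} : Finset (Fin 4)).image f4 := by simp [f4]
  have e03 : ({i, l} : Finset α) = ({0, 3} : Finset (Fin 4)).image f4 := by simp [f4]
  have e13 : ({j, l} : Finset α) = ({1, 3} : Finset (Fin 4)).image f4 := by simp [f4]
  have e23 : ({k, l} : Finset α) = ({2, 3} : Finset (Fin 4)).image f4 := by simp [f4]
  have hN : ({i, j, k, l} : Finset α) = Finset.univ.image f4 := by
    have : (Finset.univ : Finset (Fin 4)) = {0, 1, 2, 3} := by decide
    rw [this]; simp [f4]
  have key : ∀ S : Finset (Fin 4), h (S.image f4) = (hnat S : ℝ) := by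
    intro S
    rw [hdef, e02, e12, e03, e13, e23]
    simp only [himg, Finset.card_image_of_injective _ hinj]
    unfold hnat
    split_ifs with hc
    · norm_num
    · push_cast
      ring
  have hsurj : ∀ I : Finset α, I ⊆ ({i, j, k, l} : Finset α) →
      ∃ S : Finset (Fin 4), S.image f4 = I := by
    intro I hI
    refine ⟨Finset.univ.filter (fun x => f4 x ∈ I), ?_⟩
    ext a
    simp only [Finset.mem_image, Finset.mem_filter, Finset.mem_univ, true_and]
    constructor
    · rintro ⟨x, hx, rfl⟩; exact hx
    · intro ha
      have : a ∈ Finset.univ.image f4 := by rw [← hN]; exact hI ha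
      obtain ⟨x, -, rfl⟩ := Finset.mem_image.mp this
      exact ⟨x, ha, rfl⟩
  refine ⟨⟨?_, ?_, ?_⟩, ?_, ?_⟩
  · have := key ∅
    rw [Finset.image_empty] at this
    rw [this, show hnat ∅ = 0 from by decide]
    norm_num
  · intro I J hIJ hJN
    obtain ⟨T, rfl⟩ := hsurj J hJN
    obtain ⟨S, rfl⟩ := hsurj I (hIJ.trans hJN)
    rw [key, key]
    exact_mod_cast hnat_mono S T ((Finset.image_subset_image_iff hinj).mp hIJ)
  · intro I J hIN hJN
    obtain ⟨S, rfl⟩ := hsurj I hIN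
    obtain ⟨T, rfl⟩ := hsurj J hJN
    rw [← Finset.image_union, ← Finset.image_inter _ _ hinj, key, key, key, key]
    exact_mod_cast hnat_submod S T
  · intro m hm
    rw [hN] at hm ⊢
    obtain ⟨x, -, rfl⟩ := Finset.mem_image.mp hm
    have : Finset.univ.image f4 \ {f4 x} = (Finset.univ \ {x}).image f4 := by
      rw [Finset.image_sdiff _ _ hinj, Finset.image_singleton]
    rw [this, key, key]
    exact_mod_cast hnat_tight x
  · have eij : ({i, j} : Finset α) = ({0, 1} : Finset (Fin 4)).image f4 := by simp [f4]
    have ek : ({k} : Finset α) = ({2} : Finset (Fin 4)).image f4 := by simp [f4]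
    have el : ({l} : Finset α) = ({3} : Finset (Fin 4)).image f4 := by simp [f4]
    have eikl : ({i, k, l} : Finset α) = ({0, 2, 3} : Finset (Fin 4)).image f4 := by simp [f4]
    have ejkl : ({j, k, l} : Finset α) = ({1, 2, 3} : Finset (Fin 4)).image f4 := by simp [f4]
    rw [eikl, ejkl, e02, e12, e03, e13, e23, eij, ek, el,
      key, key, key, key, key, key, key, key, key, key,
      show hnat {0, 2} = 3 from by decide, show hnat {1, 2} = 3 from by decide,
      show hnat {0, 3} = 3 from by decide, show hnat {1, 3} = 3 from by decide,
      show hnat {2, 3} = 3 from by decide, show hnat {0, 1} = 4 from by decide,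
      show hnat {2} = 2 from by decide, show hnat {3} = 2 from by decide,
      show hnat {0, 2, 3} = 4 from by decide, show hnat {1, 2, 3} = 4 from by decide]
    norm_num
end

section
/- In Example of the exchangeable pair: let 0 ≤ p ≤ 1/2, let (ξ_i, ξ_j) be an exchangeable pair of {0,1}-valued random variables with P(ξ_i ξ_j = 00) = p, P(01) = P(10) = 1/2 − p, P(11) = p, ξ_k = min{ξ_i,ξ_j}, ξ_l = max{ξ_i,ξ_j}, and let h_p be the entropy function. Then the Ingleton score 𝕀_{ij}(h_p) = ⬠_{ij}h_p / h_p(N) equals [(2p+1)ln2 − 2κ(p) − 2κ(1−p)] / [2κ(p) + 2κ(1/2 − p)], where κ(u) = −u ln u (κ(0)=0). -/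
open Finset

noncomputable def kappa (u : ℝ) : ℝ := -u * Real.log u

noncomputable def ent (mu : Bool × Bool → ℝ) {γ : Type} [Fintype γ] [DecidableEq γ]
    (T : Bool × Bool → γ) : ℝ :=
  ∑ c : γ, kappa (∑ ω ∈ Finset.univ.filter (fun ω => T ω = c), mu ω)

lemma kappa_zero : kappa 0 = 0 := by simp [kappa]

lemma ent_comp (mu : Bool × Bool → ℝ) {γ δ : Type} [Fintype γ] [DecidableEq γ]
    [Fintype δ] [DecidableEq δ] (S : Bool × Bool → γ) (g : γ → δ)
    (hg : Function.Injective g) : ent mu (fun ω => g (S ω)) = ent mu S := by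
  unfold ent
  have h1 : ∑ c : δ, kappa (∑ ω ∈ Finset.univ.filter (fun ω => g (S ω) = c), mu ω)
      = ∑ c ∈ Finset.univ.image g, kappa (∑ ω ∈ Finset.univ.filter (fun ω => g (S ω) = c), mu ω) := by
    refine (Finset.sum_subset (Finset.subset_univ _) ?_).symm
    intro d _ hd
    have hempty : Finset.univ.filter (fun ω => g (S ω) = d) = ∅ := by
      apply Finset.filter_eq_empty_iff.mpr
      intro ω _ hω
      exact hd (Finset.mem_image.mpr ⟨S ω, Finset.mem_univ _, hω⟩)
    simp [hempty, kappa_zero]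
  rw [h1, Finset.sum_image (fun x _ y _ hxy => hg hxy)]
  apply Finset.sum_congr rfl
  intro c _
  congr 1
  apply Finset.sum_congr _ (fun _ _ => rfl)
  apply Finset.filter_congr
  intro ω _
  simp [hg.eq_iff]

noncomputable def mu' (p : ℝ) : Bool × Bool → ℝ := fun ω =>
  if ω = (false, false) then p else if ω = (true, true) then p else 1/2 - p

def xi : Fin 4 → Bool × Bool → Bool := fun m ω =>
  if m = 0 then ω.1 else if m = 1 then ω.2
  else if m = 2 then (ω.1 && ω.2) else (ω.1 || ω.2)

noncomputable def H (p : ℝ) (I : Finset (Fin 4)) : ℝ :=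
  ent (mu' p) (fun ω => fun m : Fin 4 => if m ∈ I then some (xi m ω) else none)

lemma H02 (p : ℝ) : H p {0, 2} = kappa (1/2) + kappa p + kappa (1/2 - p) := by
  unfold H
  rw [show (fun ω (m : Fin 4) => if m ∈ ({0, 2} : Finset (Fin 4)) then some (xi m ω) else none)
      = fun ω => (fun c : Bool × Bool => fun m : Fin 4 => if m = 0 then some c.1 else if m = 2 then some c.2 else none)
        ((fun ω : Bool × Bool => (ω.1, ω.1 && ω.2)) ω) from by decide]
  rw [ent_comp (mu' p) (fun ω : Bool × Bool => (ω.1, ω.1 && ω.2)) (fun c : Bool × Bool => fun m : Fin 4 => if m = 0 then some c.1 else if m = 2 then some c.2 else none) (by decide)]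
  simp only [ent, Fintype.sum_prod_type, Fintype.sum_bool, Finset.sum_filter, mu']
  norm_num
  try ring_nf
  try simp [kappa_zero]
  try ring


lemma H12 (p : ℝ) : H p {1, 2} = kappa (1/2) + kappa p + kappa (1/2 - p) := by
  unfold H
  rw [show (fun ω (m : Fin 4) => if m ∈ ({1, 2} : Finset (Fin 4)) then some (xi m ω) else none)
      = fun ω => (fun c : Bool × Bool => fun m : Fin 4 => if m = 1 then some c.1 else if m = 2 then some c.2 else none)
        ((fun ω : Bool × Bool => (ω.2, ω.1 && ω.2)) ω) from by decide]
  rw [ent_comp (mu' p) (fun ω : Bool × Bool => (ω.2, ω.1 && ω.2)) (fun c : Bool × Bool => fun m : Fin 4 => if m = 1 then some c.1 else if m = 2 then some c.2 else none) (by decide)]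
  simp only [ent, Fintype.sum_prod_type, Fintype.sum_bool, Finset.sum_filter, mu']
  norm_num
  try ring_nf
  try simp [kappa_zero]
  try ring


lemma H03 (p : ℝ) : H p {0, 3} = kappa (1/2) + kappa p + kappa (1/2 - p) := by
  unfold H
  rw [show (fun ω (m : Fin 4) => if m ∈ ({0, 3} : Finset (Fin 4)) then some (xi m ω) else none)
      = fun ω => (fun c : Bool × Bool => fun m : Fin 4 => if m = 0 then some c.1 else if m = 3 then some c.2 else none)
        ((fun ω : Bool × Bool => (ω.1, ω.1 || ω.2)) ω) from by decide]
  rw [ent_comp (mu' p) (fun ω : Bool × Bool => (ω.1, ω.1 || ω.2)) (fun c : Bool × Bool => fun m : Fin 4 => if m = 0 then some c.1 else if m = 3 then some c.2 else none) (by decide)]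
  simp only [ent, Fintype.sum_prod_type, Fintype.sum_bool, Finset.sum_filter, mu']
  norm_num
  try ring_nf
  try simp [kappa_zero]
  try ring


lemma H13 (p : ℝ) : H p {1, 3} = kappa (1/2) + kappa p + kappa (1/2 - p) := by
  unfold H
  rw [show (fun ω (m : Fin 4) => if m ∈ ({1, 3} : Finset (Fin 4)) then some (xi m ω) else none)
      = fun ω => (fun c : Bool × Bool => fun m : Fin 4 => if m = 1 then some c.1 else if m = 3 then some c.2 else none)
        ((fun ω : Bool × Bool => (ω.2, ω.1 || ω.2)) ω) from by decide]
  rw [ent_comp (mu' p) (fun ω : Bool × Bool => (ω.2, ω.1 || ω.2)) (fun c : Bool × Bool => fun m : Fin 4 => if m = 1 then some c.1 else if m = 3 then some c.2 else none) (by decide)]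
  simp only [ent, Fintype.sum_prod_type, Fintype.sum_bool, Finset.sum_filter, mu']
  norm_num
  try ring_nf
  try simp [kappa_zero]
  try ring


lemma H23 (p : ℝ) : H p {2, 3} = 2 * kappa p + kappa (1 - 2*p) := by
  unfold H
  rw [show (fun ω (m : Fin 4) => if m ∈ ({2, 3} : Finset (Fin 4)) then some (xi m ω) else none)
      = fun ω => (fun c : Bool × Bool => fun m : Fin 4 => if m = 2 then some c.1 else if m = 3 then some c.2 else none)
        ((fun ω : Bool × Bool => (ω.1 && ω.2, ω.1 || ω.2)) ω) from by decide]
  rw [ent_comp (mu' p) (fun ω : Bool × Bool => (ω.1 && ω.2, ω.1 || ω.2)) (fun c : Bool × Bool => fun m : Fin 4 => if m = 2 then some c.1 else if m = 3 then some c.2 else none) (by decide)]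
  simp only [ent, Fintype.sum_prod_type, Fintype.sum_bool, Finset.sum_filter, mu']
  norm_num
  try ring_nf
  try simp [kappa_zero]
  try ring


lemma H01 (p : ℝ) : H p {0, 1} = 2 * kappa p + 2 * kappa (1/2 - p) := by
  unfold H
  rw [show (fun ω (m : Fin 4) => if m ∈ ({0, 1} : Finset (Fin 4)) then some (xi m ω) else none)
      = fun ω => (fun c : Bool × Bool => fun m : Fin 4 => if m = 0 then some c.1 else if m = 1 then some c.2 else none)
        ((fun ω : Bool × Bool => ω) ω) from by decide]
  rw [ent_comp (mu' p) (fun ω : Bool × Bool => ω) (fun c : Bool × Bool => fun m : Fin 4 => if m = 0 then some c.1 else if m = 1 then some c.2 else none) (by decide)]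
  simp only [ent, Fintype.sum_prod_type, Fintype.sum_bool, Finset.sum_filter, mu']
  norm_num
  try ring_nf
  try simp [kappa_zero]
  try ring


lemma H2s (p : ℝ) : H p {2} = kappa p + kappa (1 - p) := by
  unfold H
  rw [show (fun ω (m : Fin 4) => if m ∈ ({2} : Finset (Fin 4)) then some (xi m ω) else none)
      = fun ω => (fun c : Bool => fun m : Fin 4 => if m = 2 then some c else none)
        ((fun ω : Bool × Bool => ω.1 && ω.2) ω) from by decide]
  rw [ent_comp (mu' p) (fun ω : Bool × Bool => ω.1 && ω.2) (fun c : Bool => fun m : Fin 4 => if m = 2 then some c else none) (by decide)]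
  simp only [ent, Fintype.sum_prod_type, Fintype.sum_bool, Finset.sum_filter, mu']
  norm_num
  try ring_nf
  try simp [kappa_zero]
  try ring


lemma H3s (p : ℝ) : H p {3} = kappa p + kappa (1 - p) := by
  unfold H
  rw [show (fun ω (m : Fin 4) => if m ∈ ({3} : Finset (Fin 4)) then some (xi m ω) else none)
      = fun ω => (fun c : Bool => fun m : Fin 4 => if m = 3 then some c else none)
        ((fun ω : Bool × Bool => ω.1 || ω.2) ω) from by decide]
  rw [ent_comp (mu' p) (fun ω : Bool × Bool => ω.1 || ω.2) (fun c : Bool => fun m : Fin 4 => if m = 3 then some c else none) (by decide)]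
  simp only [ent, Fintype.sum_prod_type, Fintype.sum_bool, Finset.sum_filter, mu']
  norm_num
  try ring_nf
  try simp [kappa_zero]
  try ring


lemma H023 (p : ℝ) : H p {0, 2, 3} = 2 * kappa p + 2 * kappa (1/2 - p) := by
  unfold H
  rw [show (fun ω (m : Fin 4) => if m ∈ ({0, 2, 3} : Finset (Fin 4)) then some (xi m ω) else none)
      = fun ω => (fun c : Bool × Bool => fun m : Fin 4 => if m = 0 then some c.1 else if m = 2 then some (c.1 && c.2) else if m = 3 then some (c.1 || c.2) else none)
        ((fun ω : Bool × Bool => ω) ω) from by decide]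
  rw [ent_comp (mu' p) (fun ω : Bool × Bool => ω) (fun c : Bool × Bool => fun m : Fin 4 => if m = 0 then some c.1 else if m = 2 then some (c.1 && c.2) else if m = 3 then some (c.1 || c.2) else none) (by decide)]
  simp only [ent, Fintype.sum_prod_type, Fintype.sum_bool, Finset.sum_filter, mu']
  norm_num
  try ring_nf
  try simp [kappa_zero]
  try ring


lemma H123 (p : ℝ) : H p {1, 2, 3} = 2 * kappa p + 2 * kappa (1/2 - p) := by
  unfold H
  rw [show (fun ω (m : Fin 4) => if m ∈ ({1, 2, 3} : Finset (Fin 4)) then some (xi m ω) else none)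
      = fun ω => (fun c : Bool × Bool => fun m : Fin 4 => if m = 1 then some c.2 else if m = 2 then some (c.1 && c.2) else if m = 3 then some (c.1 || c.2) else none)
        ((fun ω : Bool × Bool => ω) ω) from by decide]
  rw [ent_comp (mu' p) (fun ω : Bool × Bool => ω) (fun c : Bool × Bool => fun m : Fin 4 => if m = 1 then some c.2 else if m = 2 then some (c.1 && c.2) else if m = 3 then some (c.1 || c.2) else none) (by decide)]
  simp only [ent, Fintype.sum_prod_type, Fintype.sum_bool, Finset.sum_filter, mu']
  norm_num
  try ring_nf
  try simp [kappa_zero]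
  try ring


lemma Huniv (p : ℝ) : H p Finset.univ = 2 * kappa p + 2 * kappa (1/2 - p) := by
  unfold H
  rw [show (fun ω (m : Fin 4) => if m ∈ (Finset.univ : Finset (Fin 4)) then some (xi m ω) else none)
      = fun ω => (fun c : Bool × Bool => fun m : Fin 4 => if m = 0 then some c.1 else if m = 1 then some c.2 else if m = 2 then some (c.1 && c.2) else some (c.1 || c.2))
        ((fun ω : Bool × Bool => ω) ω) from by decide]
  rw [ent_comp (mu' p) (fun ω : Bool × Bool => ω) (fun c : Bool × Bool => fun m : Fin 4 => if m = 0 then some c.1 else if m = 1 then some c.2 else if m = 2 then some (c.1 && c.2) else some (c.1 || c.2)) (by decide)]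
  simp only [ent, Fintype.sum_prod_type, Fintype.sum_bool, Finset.sum_filter, mu']
  norm_num
  try ring_nf
  try simp [kappa_zero]
  try ring

theorem four_atom_ingleton_score (p : ℝ) (hp0 : 0 ≤ p) (hp : p ≤ 1/2) :
    let mu : Bool × Bool → ℝ := fun ω =>
      if ω = (false, false) then p else if ω = (true, true) then p else 1/2 - p
    let ξ : Fin 4 → Bool × Bool → Bool := fun m ω =>
      if m = 0 then ω.1 else if m = 1 then ω.2
      else if m = 2 then (ω.1 && ω.2) else (ω.1 || ω.2)
    let h : Finset (Fin 4) → ℝ := fun I =>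
      ent mu (fun ω => fun m : Fin 4 => if m ∈ I then some (ξ m ω) else none)
    (h {0, 2} + h {1, 2} + h {0, 3} + h {1, 3} + h {2, 3}
      - h {0, 1} - h {2} - h {3} - h {0, 2, 3} - h {1, 2, 3}) / h Finset.univ
    = ((2 * p + 1) * Real.log 2 - 2 * kappa p - 2 * kappa (1 - p))
      / (2 * kappa p + 2 * kappa (1/2 - p)) := by
  intro mu ξ h
  show (H p {0, 2} + H p {1, 2} + H p {0, 3} + H p {1, 3} + H p {2, 3}
      - H p {0, 1} - H p {2} - H p {3} - H p {0, 2, 3} - H p {1, 2, 3}) / H p Finset.univ = _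
  rw [H02, H12, H03, H13, H23, H01, H2s, H3s, H023, H123, Huniv]
  have hhalf : kappa (1/2 : ℝ) = Real.log 2 / 2 := by
    rw [kappa, show Real.log (1/2 : ℝ) = -Real.log 2 by rw [one_div, Real.log_inv]]
    ring
  have h2q : kappa (1 - 2*p) = -(1 - 2*p) * Real.log 2 + 2 * kappa (1/2 - p) := by
    rcases eq_or_lt_of_le hp with hq | hq
    · rw [hq]; norm_num [kappa]
    · have hqpos : (0:ℝ) < 1/2 - p := by linarith
      rw [show (1:ℝ) - 2*p = 2 * (1/2 - p) by ring, kappa,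
        Real.log_mul two_ne_zero (ne_of_gt hqpos), kappa]
      ring
  rw [hhalf, h2q]
  congr 1 <;> ring
end
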